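/- If the kernel density g is symmetric about zero, i.e. g(x) = g(−x) for all x ∈ ℝ, then the normalizing factor reduces to Z_θ = ρσ + 2δσ·E[G(−α√Y)], and the cumulative distribution function of X ~ TD(θ) satisfies F(μ; θ) = 1/2; in particular μ is a median of X. -/

import Mathlib

open MeasureTheory Real Set Filter

noncomputable def lincGamma (p u : ℝ) : ℝ := ∫ w in (0:ℝ)..u, w ^ (p - 1) * Real.exp (-w)

noncomputable def Tfun (p α x : ℝ) : ℝ := lincGamma p (x ^ 2 / α ^ 2) / Real.Gamma p

noncomputable def gammaPDF (p y : ℝ) : ℝ := y ^ (p - 1) * Real.exp (-y) / Real.Gamma p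

noncomputable def Znorm (p σ α ρ δ : ℝ) (g : ℝ → ℝ) : ℝ :=
  σ * ∫ w : ℝ, (ρ + δ * Tfun p α w) * g w

noncomputable def tdPDF (p μ σ α ρ δ : ℝ) (g : ℝ → ℝ) (x : ℝ) : ℝ :=
  (1 / Znorm p σ α ρ δ g) * (ρ + δ * Tfun p α ((x - μ) / σ)) * g ((x - μ) / σ)

noncomputable def cdfOf (d : ℝ → ℝ) (x : ℝ) : ℝ := ∫ t in Iic x, d t

namespace TDaux

lemma gammaPDF_nonneg {p : ℝ} (hp : 0 < p) {y : ℝ} (hy : 0 ≤ y) : 0 ≤ gammaPDF p y := by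
  unfold gammaPDF
  have hΓ := Real.Gamma_pos_of_pos hp
  positivity

lemma gammaPDF_integrableOn {p : ℝ} (hp : 0 < p) : IntegrableOn (gammaPDF p) (Ioi 0) := by
  have h := Real.GammaIntegral_convergent hp
  have h2 : IntegrableOn (fun x : ℝ => Real.exp (-x) * x ^ (p - 1) / Real.Gamma p) (Ioi 0) :=
    h.div_const _
  refine h2.congr_fun (fun x _ => ?_) measurableSet_Ioi
  unfold gammaPDF; ring

lemma gamma_integrand_intervalIntegrable {p : ℝ} (hp : 0 < p) (a b : ℝ) :
    IntervalIntegrable (fun w : ℝ => w ^ (p - 1) * Real.exp (-w)) volume a b := by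
  have h1 : IntervalIntegrable (fun w : ℝ => w ^ (p - 1)) volume a b :=
    intervalIntegral.intervalIntegrable_rpow' (by linarith)
  exact h1.mul_continuousOn (Continuous.continuousOn (by continuity))

lemma lincGamma_eq {p u : ℝ} (hu : 0 ≤ u) :
    lincGamma p u = ∫ w in Ioc (0:ℝ) u, w ^ (p - 1) * Real.exp (-w) := by
  unfold lincGamma
  rw [intervalIntegral.integral_of_le hu]

lemma Tfun_eq_integral {p α : ℝ} (hα : 0 < α) (w : ℝ) :
    Tfun p α w = ∫ y in Ioc (0:ℝ) (w ^ 2 / α ^ 2), gammaPDF p y := by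
  have hu : (0:ℝ) ≤ w ^ 2 / α ^ 2 := by positivity
  unfold Tfun
  rw [lincGamma_eq hu, ← integral_div]
  rfl

lemma Tfun_nonneg {p α : ℝ} (hp : 0 < p) (hα : 0 < α) (w : ℝ) : 0 ≤ Tfun p α w := by
  rw [Tfun_eq_integral hα]
  exact setIntegral_nonneg measurableSet_Ioc (fun y hy => gammaPDF_nonneg hp hy.1.le)

lemma Tfun_pos {p α : ℝ} (hp : 0 < p) (hα : 0 < α) {w : ℝ} (hw : w ≠ 0) :
    0 < Tfun p α w := by
  have hu : (0:ℝ) < w ^ 2 / α ^ 2 := by positivity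
  have hΓ := Real.Gamma_pos_of_pos hp
  unfold Tfun lincGamma
  apply div_pos _ hΓ
  refine intervalIntegral.intervalIntegral_pos_of_pos_on
    (gamma_integrand_intervalIntegrable hp _ _) (fun x hx => ?_) hu
  have hx0 : 0 < x := hx.1
  positivity

lemma Tfun_even {p α : ℝ} (w : ℝ) : Tfun p α (-w) = Tfun p α w := by
  unfold Tfun; rw [neg_pow]; norm_num

lemma integral_Iic_of_even {h : ℝ → ℝ} (hi : Integrable h) (he : ∀ x, h x = h (-x)) :
    ∫ x in Iic (0:ℝ), h x = (1/2) * ∫ x, h x := by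
  have hsplit : (∫ x in Iic (0:ℝ), h x) + ∫ x in Ioi (0:ℝ), h x = ∫ x, h x :=
    intervalIntegral.integral_Iic_add_Ioi hi.integrableOn hi.integrableOn
  have h2 : ∫ x in Ioi (0:ℝ), h x = ∫ x in Iic (0:ℝ), h x := by
    have : ∫ x in Ioi (0:ℝ), h x = ∫ x in Ioi (0:ℝ), h (-x) :=
      setIntegral_congr_fun measurableSet_Ioi (fun x _ => he x)
    rw [this, integral_comp_neg_Ioi, neg_zero]
  linarith

lemma integral_Iic_subst (f : ℝ → ℝ) (μ σ : ℝ) (hσ : 0 < σ) :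
    ∫ t in Iic μ, f ((t - μ)/σ) = σ * ∫ w in Iic (0:ℝ), f w := by
  have key : ∀ t : ℝ, (Iic μ).indicator (fun t => f ((t - μ)/σ)) t
      = ((Iic (0:ℝ)).indicator f) ((t - μ)/σ) := by
    intro t
    by_cases ht : t ≤ μ
    · rw [indicator_of_mem (by exact ht), indicator_of_mem]
      exact div_nonpos_iff.mpr (Or.inr ⟨by linarith, hσ.le⟩)
    · rw [indicator_of_notMem (by exact ht), indicator_of_notMem]
      intro hmem
      simp only [mem_Iic] at hmem
      rcases div_nonpos_iff.mp hmem with ⟨h1, h2⟩ | ⟨h1, h2⟩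
      · exact ht (by linarith)
      · linarith
  calc ∫ t in Iic μ, f ((t - μ)/σ)
      = ∫ t : ℝ, (Iic μ).indicator (fun t => f ((t - μ)/σ)) t := by
        rw [integral_indicator measurableSet_Iic]
    _ = ∫ t : ℝ, ((Iic (0:ℝ)).indicator f) ((t - μ)/σ) := by simp_rw [key]
    _ = ∫ t : ℝ, (fun s => ((Iic (0:ℝ)).indicator f) (s/σ)) (t - μ) := rfl
    _ = ∫ s : ℝ, ((Iic (0:ℝ)).indicator f) (s/σ) := by
        rw [integral_sub_right_eq_self (fun s => ((Iic (0:ℝ)).indicator f) (s/σ)) μ]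
    _ = |σ| • ∫ w : ℝ, ((Iic (0:ℝ)).indicator f) w := by
        rw [MeasureTheory.Measure.integral_comp_div]
    _ = σ * ∫ w in Iic (0:ℝ), f w := by
        rw [integral_indicator measurableSet_Iic, abs_of_pos hσ, smul_eq_mul]

open Function in
lemma key_swap {p α : ℝ} (hp : 0 < p) (hα : 0 < α) (g : ℝ → ℝ)
    (hgm : Measurable g) (hgi : Integrable g) (hsym : ∀ x, g x = g (-x)) :
    (∫ w : ℝ, Tfun p α w * g w)
      = 2 * ∫ y in Ioi (0:ℝ), cdfOf g (-α * Real.sqrt y) * gammaPDF p y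
    ∧ Integrable (fun w => Tfun p α w * g w) := by
  set ν : Measure ℝ := volume.restrict (Ioi 0) with hν
  set F : ℝ → ℝ → ℝ := fun w y => (if α^2 * y ≤ w^2 then g w else 0) * gammaPDF p y with hF
  have hγm : Measurable (gammaPDF p) := by unfold gammaPDF; fun_prop
  have stepA : ∀ w : ℝ, Tfun p α w * g w = ∫ y, F w y ∂ν := by
    intro w
    have hcond : ∀ y : ℝ, (α^2 * y ≤ w^2) ↔ y ∈ Iic (w^2 / α^2) := by
      intro y
      rw [mem_Iic, le_div_iff₀ (by positivity), mul_comm]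
    have : ∀ y : ℝ, F w y = (Iic (w^2/α^2)).indicator (fun y => g w * gammaPDF p y) y := by
      intro y
      by_cases hc : α^2 * y ≤ w^2
      · rw [hF]; simp only [if_pos hc, indicator_of_mem ((hcond y).mp hc)]
      · rw [hF]; simp only [if_neg hc, zero_mul,
          indicator_of_notMem (fun hmem => hc ((hcond y).mpr hmem))]
    simp_rw [hν, this]
    rw [setIntegral_indicator measurableSet_Iic]
    have hseteq : Ioi 0 ∩ Iic (w^2/α^2) = Ioc 0 (w^2/α^2) := by
      ext y; simp [mem_Ioc, mem_Ioi, mem_Iic, and_comm]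
    rw [hseteq, integral_const_mul, ← Tfun_eq_integral hα, mul_comm]
  have hFmeas : Measurable (uncurry F) := by
    apply Measurable.mul
    · exact Measurable.ite (measurableSet_le (by fun_prop) (by fun_prop))
        (hgm.comp measurable_fst) measurable_const
    · exact hγm.comp measurable_snd
  have hdom : Integrable (fun z : ℝ × ℝ => g z.1 * gammaPDF p z.2) (volume.prod ν) :=
    hgi.mul_prod (gammaPDF_integrableOn hp)
  have hFint : Integrable (uncurry F) (volume.prod ν) := by
    refine hdom.mono hFmeas.aestronglyMeasurable (Eventually.of_forall (fun z => ?_))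
    rw [hF]
    simp only [uncurry, norm_mul]
    gcongr
    by_cases hc : α^2 * z.2 ≤ z.1^2
    · rw [if_pos hc]
    · rw [if_neg hc, norm_zero]; exact norm_nonneg _
  have stepC : ∀ y ∈ Ioi (0:ℝ),
      (∫ w : ℝ, F w y) = 2 * (cdfOf g (-α * Real.sqrt y) * gammaPDF p y) := by
    intro y hy
    have hy0 : (0:ℝ) < y := hy
    set a : ℝ := α * Real.sqrt y with ha
    have ha0 : 0 < a := by positivity
    have ha2 : a^2 = α^2 * y := by
      rw [ha, mul_pow, Real.sq_sqrt hy0.le]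
    have hset : ∀ w : ℝ, (α^2 * y ≤ w^2) ↔ w ∈ Iic (-a) ∪ Ici a := by
      intro w
      rw [← ha2, ← sq_abs w,
        pow_le_pow_iff_left₀ ha0.le (abs_nonneg w) two_ne_zero, le_abs]
      constructor
      · rintro (h | h)
        · exact Or.inr h
        · exact Or.inl (by simpa [mem_Iic] using (by linarith : w ≤ -a))
      · rintro (h | h)
        · exact Or.inr (by simp only [mem_Iic] at h; linarith)
        · exact Or.inl h
    have hrefl : ∫ w in Ici a, g w = ∫ w in Iic (-a), g w := by
      have h1 : ∫ w in Iic (-a), g w = ∫ w in Iic (-a), g (-w) :=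
        setIntegral_congr_fun measurableSet_Iic (fun w _ => hsym w)
      rw [h1, integral_comp_neg_Iic, neg_neg, integral_Ici_eq_integral_Ioi]
    have hdisj : Disjoint (Iic (-a)) (Ici a) := Iic_disjoint_Ici.mpr (by linarith)
    calc (∫ w : ℝ, F w y)
        = ∫ w : ℝ, ((Iic (-a) ∪ Ici a).indicator g w) * gammaPDF p y := by
          refine integral_congr_ae (Eventually.of_forall (fun w => ?_))
          show (if α^2 * y ≤ w^2 then g w else 0) * gammaPDF p y
              = (Iic (-a) ∪ Ici a).indicator g w * gammaPDF p y
          by_cases hc : α^2 * y ≤ w^2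
          · rw [if_pos hc, indicator_of_mem ((hset w).mp hc)]
          · rw [if_neg hc, indicator_of_notMem (fun hm => hc ((hset w).mpr hm))]
      _ = (∫ w in Iic (-a) ∪ Ici a, g w) * gammaPDF p y := by
          rw [integral_mul_const, integral_indicator (measurableSet_Iic.union measurableSet_Ici)]
      _ = 2 * (cdfOf g (-α * Real.sqrt y) * gammaPDF p y) := by
          rw [setIntegral_union hdisj measurableSet_Ici hgi.integrableOn hgi.integrableOn,
            hrefl]
          unfold cdfOf
          rw [neg_mul]
          ring
  constructor
  · calc (∫ w : ℝ, Tfun p α w * g w)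
        = ∫ w : ℝ, ∫ y, F w y ∂ν := by simp_rw [stepA]
      _ = ∫ y, (∫ w : ℝ, F w y) ∂ν := integral_integral_swap hFint
      _ = ∫ y in Ioi (0:ℝ), 2 * (cdfOf g (-α * Real.sqrt y) * gammaPDF p y) := by
          rw [hν]
          exact setIntegral_congr_fun measurableSet_Ioi stepC
      _ = 2 * ∫ y in Ioi (0:ℝ), cdfOf g (-α * Real.sqrt y) * gammaPDF p y :=
          integral_const_mul 2 _
  · have := hFint.integral_prod_left
    refine this.congr (Eventually.of_forall (fun w => ?_))
    exact (stepA w).symm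

end TDaux

open TDaux in
/-- symmetric kernel: simplified normalizing factor and `F(μ) = 1/2`,
so `μ` is a median. -/
theorem stmt2 (p μ σ α ρ δ : ℝ) (hp : 0 < p) (hσ : 0 < σ) (hα : 0 < α)
    (hρ : 0 ≤ ρ) (hδ : 0 ≤ δ) (hρδ : 0 < ρ + δ)
    (g : ℝ → ℝ) (hg0 : ∀ x, 0 ≤ g x) (hgm : Measurable g)
    (hgi : Integrable g) (hg1 : (∫ x : ℝ, g x) = 1)
    (hsym : ∀ x : ℝ, g x = g (-x)) :
    Znorm p σ α ρ δ g
        = ρ * σ + 2 * δ * σ * (∫ y in Ioi (0:ℝ), cdfOf g (-α * Real.sqrt y) * gammaPDF p y)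
    ∧ cdfOf (tdPDF p μ σ α ρ δ g) μ = 1 / 2 := by
  obtain ⟨hJeq, hTg_int⟩ := key_swap hp hα g hgm hgi hsym
  set J : ℝ := ∫ w : ℝ, Tfun p α w * g w with hJ
  set K : ℝ := ∫ y in Ioi (0:ℝ), cdfOf g (-α * Real.sqrt y) * gammaPDF p y with hK
  -- the unnormalized density h
  set h : ℝ → ℝ := fun w => (ρ + δ * Tfun p α w) * g w with hh
  have hh_int : Integrable h := by
    have : Integrable (fun w => ρ * g w + δ * (Tfun p α w * g w)) :=
      (hgi.const_mul ρ).add (hTg_int.const_mul δ)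
    refine this.congr (Filter.Eventually.of_forall (fun w => ?_))
    rw [hh]; ring
  have hI : (∫ w : ℝ, h w) = ρ + δ * J := by
    have : (∫ w : ℝ, h w) = ∫ w : ℝ, (ρ * g w + δ * (Tfun p α w * g w)) := by
      refine integral_congr_ae (Filter.Eventually.of_forall (fun w => ?_))
      rw [hh]; ring
    rw [this, integral_add (hgi.const_mul ρ) (hTg_int.const_mul δ),
      integral_const_mul, integral_const_mul, hg1, ← hJ, mul_one]
  have hZ : Znorm p σ α ρ δ g = σ * (ρ + δ * J) := by
    unfold Znorm; rw [← hI]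
  have hpart1 : Znorm p σ α ρ δ g
      = ρ * σ + 2 * δ * σ * K := by
    rw [hZ, hJeq]; ring
  refine ⟨hpart1, ?_⟩
  -- positivity of the normalizing constant
  have hJ0 : 0 ≤ J := by
    rw [hJ]
    exact integral_nonneg (fun w => mul_nonneg (Tfun_nonneg hp hα w) (hg0 w))
  have hIpos : 0 < ρ + δ * J := by
    rcases lt_or_eq_of_le hρ with hρ' | hρ'
    · have : 0 ≤ δ * J := mul_nonneg hδ hJ0
      linarith
    · -- ρ = 0, so δ > 0 and J > 0
      have hδ' : 0 < δ := by linarith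
      have hJpos : 0 < J := by
        rw [hJ]
        rw [integral_pos_iff_support_of_nonneg
          (fun w => mul_nonneg (Tfun_nonneg hp hα w) (hg0 w)) hTg_int]
        have hgsupp : 0 < volume (Function.support g) := by
          have := (integral_pos_iff_support_of_nonneg hg0 hgi).mp (by rw [hg1]; norm_num)
          exact this
        have hsub : Function.support g ⊆
            Function.support (fun w => Tfun p α w * g w) ∪ {0} := by
          intro x hx
          by_cases hx0 : x = 0
          · exact Or.inr (by simp [hx0])
          · left
            have hT := Tfun_pos hp hα hx0
            have hgx : 0 < g x := lt_of_le_of_ne (hg0 x) (Ne.symm hx)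
            exact (mul_pos hT hgx).ne'
        by_contra hcon
        push_neg at hcon
        have h0 : volume (Function.support (fun w => Tfun p α w * g w)) = 0 :=
          le_antisymm hcon zero_le
        have : volume (Function.support g) = 0 := by
          refine measure_mono_null hsub ?_
          rw [measure_union_null_iff]
          exact ⟨h0, measure_singleton 0⟩
        exact absurd this hgsupp.ne'
      have : 0 < δ * J := mul_pos hδ' hJpos
      linarith
  have hZpos : 0 < Znorm p σ α ρ δ g := by rw [hZ]; exact mul_pos hσ hIpos
  have hZne : Znorm p σ α ρ δ g ≠ 0 := hZpos.ne'
  -- evenness of h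
  have heven : ∀ x : ℝ, h x = h (-x) := by
    intro x
    rw [hh]
    simp only
    rw [Tfun_even, ← hsym]
  -- compute the cdf at μ
  have hcdf : cdfOf (tdPDF p μ σ α ρ δ g) μ
      = (1 / Znorm p σ α ρ δ g) * (σ * ∫ w in Iic (0:ℝ), h w) := by
    unfold cdfOf
    have : ∀ t : ℝ, tdPDF p μ σ α ρ δ g t
        = (1 / Znorm p σ α ρ δ g) * h ((t - μ)/σ) := by
      intro t
      unfold tdPDF
      rw [hh]; ring
    rw [setIntegral_congr_fun measurableSet_Iic (fun t _ => this t),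
      integral_const_mul, integral_Iic_subst h μ σ hσ]
  rw [hcdf, integral_Iic_of_even hh_int heven, hI, hZ]
  have h1 : σ ≠ 0 := hσ.ne'
  have h2 : ρ + δ * J ≠ 0 := hIpos.ne'
  field_simp
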